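/- Let U_D(λ) be infinite with D = ⟨d₀,…,d_{h−1}⟩, h > 0, and suppose the complete D-visit from λ contains two nodes one of which is the d₀-child of the other. Then the visit contains a node f(n), n > 0, which is stable and is the d₀-child of another node of the visit. -/

import Mathlib

/-- A `k`-ary tree: a prefix-closed set of finite lists over colors `< k`,
containing the empty list. -/
def IsKTree (k : ℕ) (U : Set (List ℕ)) : Prop :=
  [] ∈ U ∧ (∀ l ∈ U, ∀ p : List ℕ, p <+: l → p ∈ U) ∧ ∀ l ∈ U, ∀ c ∈ l, c < k

/-- `L` is `D`-complete: every child (in `U`) with color in `D` of a node of `L` is in `L`. -/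
def DComplete (U : Set (List ℕ)) (D : List ℕ) (L : List (List ℕ)) : Prop :=
  ∀ μ ∈ L, ∀ d ∈ D, μ ++ [d] ∈ U → μ ++ [d] ∈ L

/-- `ν` is the `n`-th `d`-expansion of `M`: `ν = μ ++ [d] ∈ U` for some `μ ∈ M`, and exactly
`n` nodes of `M` lexicographically below `μ` have a `d`-child in `U`. -/
def DExpansion (U : Set (List ℕ)) (M : List (List ℕ)) (n d : ℕ) (ν : List ℕ) : Prop :=
  ν ∈ U ∧ ∃ μ ∈ M, ν = μ ++ [d] ∧
    {η | η ∈ M ∧ η ++ [d] ∈ U ∧ List.Lex (· < ·) η μ}.ncard = n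

/-- `DVisit U D lam L` : `L` is a `D`-visit of `U` from `lam`. -/
inductive DVisit (U : Set (List ℕ)) : List ℕ → List ℕ → List (List ℕ) → Prop
  | base (lam : List ℕ) : lam ∈ U → DVisit U [] lam [lam]
  | step (d : ℕ) (D : List ℕ) (lam : List ℕ) (M : List (List ℕ))
      (Ls : List (List (List ℕ))) :
      DVisit U D lam M →
      (1 < Ls.length → DComplete U D M) →
      (∀ j : Fin Ls.length, Ls.get j ≠ []) →
      (∀ j : Fin Ls.length, DExpansion U M j.1 d ((Ls.get j).headI)) →
      (∀ j : Fin Ls.length, DVisit U (D ++ [d]) ((Ls.get j).headI) (Ls.get j)) →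
      (∀ j : Fin Ls.length, j.1 + 1 < Ls.length → DComplete U (d :: D) (Ls.get j)) →
      DVisit U (d :: D) lam (M ++ Ls.flatten)

/-- `U_D(lam)`: the nodes of `U` extending `lam` by a suffix with colors only from `D`. -/
def subtreeD (U : Set (List ℕ)) (D : List ℕ) (lam : List ℕ) : Set (List ℕ) :=
  {μ | μ ∈ U ∧ ∃ η : List ℕ, μ = lam ++ η ∧ ∀ c ∈ η, c ∈ D}

/-- `f` enumerates the complete `D`-visit of `U` from `lam`:
each initial segment `[f 0, …, f m]` is a `D`-visit from `lam`. -/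
def Enumerates (U : Set (List ℕ)) (D lam : List ℕ) (f : ℕ → List ℕ) : Prop :=
  ∀ m : ℕ, DVisit U D lam ((List.range (m + 1)).map f)

/-- `μ` is stable for the enumeration `f`: all later nodes are proper descendants of `μ`. -/
def Stable (f : ℕ → List ℕ) (μ : List ℕ) : Prop :=
  ∃ m, f m = μ ∧ ∀ n, m < n → μ <+: f n ∧ μ ≠ f n

/-- `r` is an infinite branch of the tree `T` (of finite lists): an infinite chain
under the prefix order, downward closed within `T`. -/
def IsInfBranchL (T : Set (List ℕ)) (r : Set (List ℕ)) : Prop :=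
  r ⊆ T ∧ r.Infinite ∧ (∀ μ ∈ r, ∀ ν ∈ r, μ <+: ν ∨ ν <+: μ) ∧
  (∀ μ ∈ r, ∀ η ∈ T, η <+: μ → η ∈ r)

/-! ### Auxiliary lemmas -/

lemma flatten_take_succ {α : Type} (Ls : List (List α)) {j : ℕ} (hj : j < Ls.length) :
    (Ls.take (j+1)).flatten = (Ls.take j).flatten ++ Ls[j] := by
  rw [List.take_succ, List.getElem?_eq_getElem hj]
  rw [List.flatten_append]
  simp

lemma flatten_decomp {α : Type} (Ls : List (List α)) {j : ℕ} (hj : j < Ls.length) :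
    Ls.flatten = (Ls.take j).flatten ++ (Ls[j] ++ (Ls.drop (j+1)).flatten) := by
  conv_lhs => rw [← List.take_append_drop j Ls]
  rw [List.flatten_append, List.drop_eq_getElem_cons hj, List.flatten_cons]

lemma flatten_len_ge {α : Type} (Ls : List (List α)) {j : ℕ} (hj : j < Ls.length) :
    (Ls.take j).flatten.length + Ls[j].length ≤ Ls.flatten.length := by
  rw [flatten_decomp Ls hj]
  simp

lemma flatten_getElem {α : Type} (Ls : List (List α)) {j : ℕ} (hj : j < Ls.length) {t : ℕ}
    (ht : t < Ls[j].length) (hidx : (Ls.take j).flatten.length + t < Ls.flatten.length) :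
    Ls.flatten[(Ls.take j).flatten.length + t] = Ls[j][t] := by
  rw [List.getElem_of_eq (flatten_decomp Ls hj) hidx]
  rw [List.getElem_append_right (by omega)]
  rw [List.getElem_append_left (by omega)]
  congr 1
  omega

lemma flatten_getElem? {α : Type} (Ls : List (List α)) {j : ℕ} (hj : j < Ls.length) {t : ℕ}
    (ht : t < Ls[j].length) :
    Ls.flatten[(Ls.take j).flatten.length + t]? = some Ls[j][t] := by
  have hidx : (Ls.take j).flatten.length + t < Ls.flatten.length := by
    have := flatten_len_ge Ls hj; omega
  rw [List.getElem?_eq_getElem hidx, flatten_getElem Ls hj ht hidx]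

lemma flatten_index {α : Type} : ∀ (Ls : List (List α)) (i : ℕ), i < Ls.flatten.length →
    ∃ j, ∃ hj : j < Ls.length, ((Ls.take j).flatten).length ≤ i ∧
      i < ((Ls.take j).flatten).length + Ls[j].length
  | [], i, hi => by simp at hi
  | a :: tl, i, hi => by
    by_cases h : i < a.length
    · exact ⟨0, by simp, by simp, by simpa using h⟩
    · push_neg at h
      have hi' : i - a.length < tl.flatten.length := by
        simp only [List.flatten_cons, List.length_append] at hi; omega
      obtain ⟨j, hj, h1, h2⟩ := flatten_index tl (i - a.length) hi'
      refine ⟨j+1, by simpa using hj, ?_, ?_⟩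
      · simp only [List.take_succ_cons, List.flatten_cons, List.length_append]; omega
      · simp only [List.take_succ_cons, List.flatten_cons, List.length_append,
          List.getElem_cons_succ]; omega

lemma flatten_take_strict {α : Type} (Ls : List (List α))
    (hne : ∀ j (h : j < Ls.length), Ls[j] ≠ []) {j j' : ℕ} (h : j < j') (h' : j' ≤ Ls.length) :
    (Ls.take j).flatten.length < (Ls.take j').flatten.length := by
  induction j' with
  | zero => omega
  | succ n ih =>
    have hn : n < Ls.length := by omega
    rw [flatten_take_succ Ls hn, List.length_append]
    have hpos : 0 < Ls[n].length := List.length_pos_iff.2 (hne n hn)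
    rcases Nat.lt_or_ge j n with hc | hc
    · have := ih hc (by omega); omega
    · have : j = n := by omega
      subst this
      omega

lemma getElem_tail_mem {α : Type} (a : α) (tb : List α) (t : ℕ) (h0 : 0 < t)
    (ht : t < (a :: tb).length) : (a :: tb)[t] ∈ tb := by
  match t, h0 with
  | t'+1, _ =>
    rw [List.getElem_cons_succ]
    exact List.getElem_mem (by simp at ht; omega)

lemma no_d_extend {lam η η₀ σ : List ℕ} {d : ℕ}
    (h : lam ++ (η ++ [d]) = lam ++ (η₀ ++ ([d] ++ σ))) (hσ : σ ≠ []) (hη : d ∉ η) : False := by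
  have h2 : η ++ [d] = η₀ ++ ([d] ++ σ) := List.append_cancel_left h
  have hσ1 : 0 < σ.length := List.length_pos_iff.2 hσ
  have hlen : η₀.length + 1 ≤ η.length := by
    have := congrArg List.length h2
    simp at this
    omega
  have hpre1 : (η₀ ++ [d]) <+: (η ++ [d]) := ⟨σ, by rw [h2]; simp⟩
  have hpre2 : η <+: (η ++ [d]) := List.prefix_append η [d]
  have hpre : (η₀ ++ [d]) <+: η := List.prefix_of_prefix_length_le hpre1 hpre2 (by simp; omega)
  exact hη (hpre.sublist.mem (by simp))

lemma bd_not_dfree {lam η η' : List ℕ} {d : ℕ}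
    (h : lam ++ (η ++ [d]) = lam ++ η') (hd : d ∉ η') : False := by
  have h2 : η ++ [d] = η' := List.append_cancel_left h
  exact hd (h2 ▸ (by simp : d ∈ η ++ [d]))

lemma dvisit_shape {U : Set (List ℕ)} {D lam : List ℕ} {L : List (List ℕ)}
    (h : DVisit U D lam L) :
    ∃ t, L = lam :: t ∧ ∀ μ ∈ t, ∃ η, μ = lam ++ η ∧ η ≠ [] ∧ ∀ c ∈ η, c ∈ D := by
  induction h with
  | base lam h => exact ⟨[], rfl, by simp⟩
  | step d D lam M Ls hM hcomp hne hexp hvis hcomp2 ihM ihB =>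
    obtain ⟨tM, rfl, htM⟩ := ihM
    refine ⟨tM ++ Ls.flatten, by simp, ?_⟩
    intro μ hmu
    have hblock : ∀ e ∈ Ls.flatten, ∃ η, e = lam ++ η ∧ η ≠ [] ∧ ∀ c ∈ η, c ∈ d :: D := by
      intro e he
      obtain ⟨l, hl, hel⟩ := List.mem_flatten.1 he
      obtain ⟨j, hjl⟩ := List.mem_iff_get.1 hl
      subst hjl
      obtain ⟨tb, hb, htb⟩ := ihB j
      obtain ⟨-, μ₀, hμ₀M, hhead, -⟩ := hexp j
      have hμ₀ : ∃ η₀, μ₀ = lam ++ η₀ ∧ ∀ c ∈ η₀, c ∈ D := by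
        rcases List.mem_cons.1 hμ₀M with h0 | h0
        · exact ⟨[], by simp [h0], by simp⟩
        · obtain ⟨η₀, rfl, -, hc⟩ := htM μ₀ h0
          exact ⟨η₀, rfl, hc⟩
      obtain ⟨η₀, rfl, hc₀⟩ := hμ₀
      have hhead' : (Ls.get j).headI = lam ++ (η₀ ++ [d]) := by rw [hhead, List.append_assoc]
      rw [hb] at hel
      rcases List.mem_cons.1 hel with rfl | hel
      · refine ⟨η₀ ++ [d], hhead', by simp, ?_⟩
        intro c hc
        rcases List.mem_append.1 hc with hc | hc
        · exact List.mem_cons_of_mem _ (hc₀ c hc)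
        · simp at hc; simp [hc]
      · obtain ⟨σ, rfl, hσne, hσc⟩ := htb e hel
        refine ⟨(η₀ ++ [d]) ++ σ, by rw [hhead']; simp, by simp, ?_⟩
        intro c hc
        rcases List.mem_append.1 hc with hc | hc
        · rcases List.mem_append.1 hc with hc | hc
          · exact List.mem_cons_of_mem _ (hc₀ c hc)
          · simp at hc; simp [hc]
        · have := hσc c hc
          rcases List.mem_append.1 this with hc' | hc'
          · exact List.mem_cons_of_mem _ hc'
          · simp at hc'; simp [hc']
    rcases List.mem_append.1 hmu with hmu | hmu
    · obtain ⟨η, rfl, hne', hcol⟩ := htM μ hmu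
      exact ⟨η, rfl, hne', fun c hc => List.mem_cons_of_mem _ (hcol c hc)⟩
    · exact hblock μ hmu

lemma dvisit_cons_inv {U : Set (List ℕ)} {d : ℕ} {D' lam : List ℕ} {L : List (List ℕ)}
    (h : DVisit U (d :: D') lam L) :
    ∃ (M : List (List ℕ)) (Ls : List (List (List ℕ))), L = M ++ Ls.flatten ∧
      DVisit U D' lam M ∧
      (∀ j : Fin Ls.length, Ls.get j ≠ []) ∧
      (∀ j : Fin Ls.length, DExpansion U M j.1 d ((Ls.get j).headI)) ∧
      (∀ j : Fin Ls.length, DVisit U (D' ++ [d]) ((Ls.get j).headI) (Ls.get j)) := by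
  cases h with
  | step d D lam M Ls hM hcomp hne hexp hvis hcomp2 =>
    exact ⟨M, Ls, rfl, hM, hne, hexp, hvis⟩

/-- if the complete D-visit (D = d₀ :: D') contains a d₀-child of one
of its nodes, then it contains a stable node f n, n > 0, which is the d₀-child of
another node of the visit. -/
theorem stable_d0_child (k : ℕ) (U : Set (List ℕ)) (hU : IsKTree k U)
    (d : ℕ) (D' : List ℕ) (hDnd : (d :: D').Nodup) (hDk : ∀ c ∈ d :: D', c < k)
    (lam : List ℕ) (hlam : lam ∈ U)
    (hinf : (subtreeD U (d :: D') lam).Infinite)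
    (f : ℕ → List ℕ) (hf : Enumerates U (d :: D') lam f)
    (hex : ∃ m n : ℕ, f n = f m ++ [d]) :
    ∃ n, 0 < n ∧ Stable f (f n) ∧ ∃ m, f n = f m ++ [d] := by
  classical
  have hd' : d ∉ D' := (List.nodup_cons.1 hDnd).1
  obtain ⟨m₀, n₀, hmn⟩ := hex
  -- every node of the visit extends lam
  have hext : ∀ i : ℕ, ∃ η, f i = lam ++ η := by
    intro i
    obtain ⟨t, ht, htail⟩ := dvisit_shape (hf i)
    have hmem : f i ∈ (List.range (i+1)).map f :=
      List.mem_map_of_mem (f := f) (List.mem_range.2 (by omega))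
    rw [ht] at hmem
    rcases List.mem_cons.1 hmem with h | h
    · exact ⟨[], by simp [h]⟩
    · obtain ⟨η, hη, -, -⟩ := htail _ h; exact ⟨η, hη⟩
  have hf0 : f 0 = lam := by
    obtain ⟨t, ht, -⟩ := dvisit_shape (hf 0)
    simp [List.range_succ] at ht
    exact ht.1
  -- some node is not "d-free"
  have hQex : ∃ n : ℕ, ¬ ∃ η, f n = lam ++ η ∧ d ∉ η := by
    refine ⟨n₀, ?_⟩
    rintro ⟨η, hη, hdη⟩
    obtain ⟨ηm, hm⟩ := hext m₀
    exact bd_not_dfree (lam := lam) (d := d)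
      (by rw [← List.append_assoc, ← hm, ← hmn, hη]) hdη
  set c0 := Nat.find hQex with hc0def
  have hc0 : ¬ ∃ η, f c0 = lam ++ η ∧ d ∉ η := Nat.find_spec hQex
  have hmin : ∀ i, i < c0 → ∃ η, f i = lam ++ η ∧ d ∉ η := by
    intro i hi
    exact not_not.1 (Nat.find_min hQex hi)
  have hc0pos : 0 < c0 := by
    rcases Nat.eq_zero_or_pos c0 with h | h
    · exfalso; apply hc0; rw [h]; exact ⟨[], by simp [hf0], by simp⟩
    · exact h
  -- The key decomposition of the visit of length p+1, for p ≥ c0.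
  have KEY : ∀ p : ℕ, c0 ≤ p → ∃ Ls : List (List (List ℕ)),
      Ls ≠ [] ∧
      (∀ (j : ℕ) (hj : j < Ls.length), Ls[j] ≠ []) ∧
      (∀ (j : ℕ) (hj : j < Ls.length),
        DExpansion U ((List.range c0).map f) j d (Ls[j].headI)) ∧
      (∀ (j : ℕ) (hj : j < Ls.length), ∃ tb, Ls[j] = Ls[j].headI :: tb ∧
          ∀ μ ∈ tb, ∃ σ, μ = Ls[j].headI ++ σ ∧ σ ≠ []) ∧
      (∀ (j : ℕ) (hj : j < Ls.length) (t : ℕ) (ht : t < Ls[j].length),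
          f (c0 + (Ls.take j).flatten.length + t) = Ls[j][t]) ∧
      (p + 1 = c0 + Ls.flatten.length) ∧
      (∀ (j : ℕ) (hj : j < Ls.length), ∃ m η, m < c0 ∧ Ls[j].headI = f m ++ [d] ∧
          f m = lam ++ η ∧ d ∉ η) ∧
      (∀ (j : ℕ) (hj : j < Ls.length),
          f (c0 + (Ls.take j).flatten.length) = Ls[j].headI) := by
    intro p hp
    obtain ⟨M, Ls, hPeq, hMvis, hbne, hbexp, hbvis⟩ := dvisit_cons_inv (hf p)
    obtain ⟨tM, hMeq, htM⟩ := dvisit_shape hMvis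
    have hMdf : ∀ μ ∈ M, ∃ η, μ = lam ++ η ∧ d ∉ η := by
      intro μ hμ
      rw [hMeq] at hμ
      rcases List.mem_cons.1 hμ with rfl | hμ
      · exact ⟨[], by simp, by simp⟩
      · obtain ⟨η, rfl, -, hcol⟩ := htM μ hμ
        exact ⟨η, rfl, fun hd0 => hd' (hcol d hd0)⟩
    have hlenP : p + 1 = M.length + Ls.flatten.length := by
      have := congrArg List.length hPeq; simpa using this
    have hPi : ∀ i : ℕ, i < p + 1 → (M ++ Ls.flatten)[i]? = some (f i) := by
      intro i hi
      rw [← hPeq]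
      simp [List.getElem?_map, List.getElem?_range, hi]
    -- flatten elements are not d-free
    have hFl : ∀ e ∈ Ls.flatten, ∀ η, e = lam ++ η → d ∈ η := by
      intro e he η hη
      obtain ⟨l, hl, hel⟩ := List.mem_flatten.1 he
      obtain ⟨jf, hjf⟩ := List.mem_iff_get.1 hl
      obtain ⟨-, μ₀, hμ₀, hhead, -⟩ := hbexp jf
      obtain ⟨η₀, hη₀, hdη₀⟩ := hMdf μ₀ hμ₀
      obtain ⟨tb, hb, htb⟩ := dvisit_shape (hbvis jf)
      rw [← hjf, hb] at hel
      rcases List.mem_cons.1 hel with rfl | hel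
      · have he2 : lam ++ η = lam ++ (η₀ ++ [d]) := by
          rw [← hη, hhead, hη₀, List.append_assoc]
        have : η = η₀ ++ [d] := List.append_cancel_left he2
        simp [this]
      · obtain ⟨σ, hσ, hσne, -⟩ := htb e hel
        have he2 : lam ++ η = lam ++ (η₀ ++ ([d] ++ σ)) := by
          rw [← hη, hσ, hhead, hη₀]
          simp [List.append_assoc]
        have : η = η₀ ++ ([d] ++ σ) := List.append_cancel_left he2
        simp [this]
    -- M has length exactly c0
    have hMlen : M.length = c0 := by
      rcases Nat.lt_trichotomy M.length c0 with hlt | heq | hgt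
      · exfalso
        by_cases hfl : Ls.flatten = []
        · rw [hfl] at hlenP; simp at hlenP; omega
        · have h0 : 0 < Ls.flatten.length := List.length_pos_iff.2 hfl
          have e1 : (M ++ Ls.flatten)[M.length]? = some (f M.length) :=
            hPi M.length (by omega)
          have e2 : (M ++ Ls.flatten)[M.length]? = some (Ls.flatten[0]'h0) := by
            rw [List.getElem?_append_right (le_refl _)]
            simp [List.getElem?_eq_getElem h0]
          have e3 : f M.length = Ls.flatten[0]'h0 := by
            rw [e1] at e2; exact Option.some.inj e2
          obtain ⟨η, hη, hdη⟩ := hmin M.length hlt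
          exact hdη (hFl _ (List.getElem_mem h0) η (by rw [← e3, hη]))
      · exact heq
      · exfalso
        have e1 : (M ++ Ls.flatten)[c0]? = some (f c0) := hPi c0 (by omega)
        have e2 : (M ++ Ls.flatten)[c0]? = some (M[c0]'hgt) := by
          rw [List.getElem?_append_left hgt]
          simp [List.getElem?_eq_getElem hgt]
        have e3 : f c0 = M[c0]'hgt := by rw [e1] at e2; exact Option.some.inj e2
        obtain ⟨η, hη, hdη⟩ := hMdf _ (List.getElem_mem hgt)
        exact hc0 ⟨η, by rw [e3, hη], hdη⟩
    have hMfix : M = (List.range c0).map f := by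
      have h1 : ((List.range (p+1)).map f).take c0 = M := by
        rw [hPeq, ← hMlen, List.take_left]
      have h2 : ((List.range (p+1)).map f).take c0 = (List.range c0).map f := by
        rw [← List.map_take, List.take_range, Nat.min_eq_left (by omega)]
      rw [← h1, h2]
    have hLsne : Ls ≠ [] := by
      intro h; subst h; simp at hlenP; omega
    -- getElem-level values
    have hgetf : ∀ (j : ℕ) (hj : j < Ls.length) (t : ℕ) (ht : t < Ls[j].length),
        f (c0 + (Ls.take j).flatten.length + t) = Ls[j][t] := by
      intro j hj t ht
      have hidx : (Ls.take j).flatten.length + t < Ls.flatten.length := by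
        have := flatten_len_ge Ls hj; omega
      have e1 : (M ++ Ls.flatten)[c0 + (Ls.take j).flatten.length + t]? =
          some (f (c0 + (Ls.take j).flatten.length + t)) := hPi _ (by omega)
      have e2 : (M ++ Ls.flatten)[c0 + (Ls.take j).flatten.length + t]? =
          some Ls[j][t] := by
        rw [List.getElem?_append_right (by omega)]
        rw [show c0 + (Ls.take j).flatten.length + t - M.length =
          (Ls.take j).flatten.length + t by omega]
        exact flatten_getElem? Ls hj ht
      rw [e1] at e2; exact Option.some.inj e2
    have hbne' : ∀ (j : ℕ) (hj : j < Ls.length), Ls[j] ≠ [] := fun j hj => hbne ⟨j, hj⟩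
    have htb' : ∀ (j : ℕ) (hj : j < Ls.length), ∃ tb, Ls[j] = Ls[j].headI :: tb ∧
        ∀ μ ∈ tb, ∃ σ, μ = Ls[j].headI ++ σ ∧ σ ≠ [] := by
      intro j hj
      obtain ⟨tb, hb, htb⟩ := dvisit_shape (hbvis ⟨j, hj⟩)
      exact ⟨tb, hb, fun μ hμ => by
        obtain ⟨σ, hσ, hσne, -⟩ := htb μ hμ
        exact ⟨σ, hσ, hσne⟩⟩
    have hexp' : ∀ (j : ℕ) (hj : j < Ls.length),
        DExpansion U ((List.range c0).map f) j d (Ls[j].headI) := by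
      intro j hj
      have := hbexp ⟨j, hj⟩
      rwa [hMfix] at this
    have hhead9 : ∀ (j : ℕ) (hj : j < Ls.length),
        f (c0 + (Ls.take j).flatten.length) = Ls[j].headI := by
      intro j hj
      obtain ⟨tb, hb, -⟩ := htb' j hj
      have ht0 : 0 < Ls[j].length := List.length_pos_iff.2 (hbne' j hj)
      have := hgetf j hj 0 ht0
      rw [List.getElem_of_eq hb ht0] at this
      simpa using this
    have hhead8 : ∀ (j : ℕ) (hj : j < Ls.length), ∃ m η, m < c0 ∧
        Ls[j].headI = f m ++ [d] ∧ f m = lam ++ η ∧ d ∉ η := by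
      intro j hj
      obtain ⟨-, μ, hμ, hμeq, -⟩ := hexp' j hj
      obtain ⟨m, hm, hfm⟩ := List.mem_map.1 hμ
      have hmc : m < c0 := List.mem_range.1 hm
      obtain ⟨η, hη, hdη⟩ := hmin m hmc
      exact ⟨m, η, hmc, by rw [hμeq, hfm], hη, hdη⟩
    exact ⟨Ls, hLsne, hbne', hexp', htb', hgetf, by omega, hhead8, hhead9⟩
  -- the boundary set
  set B : Set ℕ := {n | ∃ η, f n = lam ++ η ++ [d] ∧ d ∉ η} with hBdef
  have hBge : ∀ n ∈ B, c0 ≤ n := by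
    rintro n ⟨η, hη, hdη⟩
    by_contra h
    push_neg at h
    obtain ⟨η', hη', hdη'⟩ := hmin n h
    exact bd_not_dfree (lam := lam) (d := d)
      (by rw [← List.append_assoc, ← hη, hη']) hdη'
  -- boundary positions are block head positions
  have HPOS : ∀ (p : ℕ) (Ls : List (List (List ℕ))),
      (p + 1 = c0 + Ls.flatten.length) →
      (∀ (j : ℕ) (hj : j < Ls.length), ∃ tb, Ls[j] = Ls[j].headI :: tb ∧
          ∀ μ ∈ tb, ∃ σ, μ = Ls[j].headI ++ σ ∧ σ ≠ []) →
      (∀ (j : ℕ) (hj : j < Ls.length) (t : ℕ) (ht : t < Ls[j].length),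
          f (c0 + (Ls.take j).flatten.length + t) = Ls[j][t]) →
      (∀ (j : ℕ) (hj : j < Ls.length), ∃ m η, m < c0 ∧ Ls[j].headI = f m ++ [d] ∧
          f m = lam ++ η ∧ d ∉ η) →
      ∀ n, n ≤ p → n ∈ B →
      ∃ j, ∃ hj : j < Ls.length, n = c0 + (Ls.take j).flatten.length := by
    intro p Ls hlen7 htb hgetf hhead8 n hnp hnB
    have hcn : c0 ≤ n := hBge n hnB
    have hi : n - c0 < Ls.flatten.length := by omega
    obtain ⟨j, hj, h1, h2⟩ := flatten_index Ls (n - c0) hi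
    by_cases ht0 : n - c0 - (Ls.take j).flatten.length = 0
    · exact ⟨j, hj, by omega⟩
    · exfalso
      set t := n - c0 - (Ls.take j).flatten.length with htd
      have htlt : t < Ls[j].length := by omega
      have hfval : f n = Ls[j][t] := by
        have := hgetf j hj t htlt
        rwa [show c0 + (Ls.take j).flatten.length + t = n by omega] at this
      obtain ⟨tb, hbe, htbj⟩ := htb j hj
      have hmem : Ls[j][t] ∈ tb := by
        rw [List.getElem_of_eq hbe htlt]
        exact getElem_tail_mem _ _ _ (by omega) (by rw [← hbe]; exact htlt)
      obtain ⟨σ, hσ, hσne⟩ := htbj _ hmem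
      obtain ⟨m, η₀, hm, hh, hfm, hdη₀⟩ := hhead8 j hj
      obtain ⟨η, hη, hdη⟩ := hnB
      refine no_d_extend (lam := lam) (η := η) (η₀ := η₀) (σ := σ) (d := d) ?_ hσne hdη
      calc lam ++ (η ++ [d]) = f n := by rw [hη]; simp [List.append_assoc]
      _ = lam ++ (η₀ ++ ([d] ++ σ)) := by
          rw [hfval, hσ, hh, hfm]; simp [List.append_assoc]
  -- c0 ∈ B
  have hBc0 : c0 ∈ B := by
    obtain ⟨Ls, hLsne, hbne, hexp, htb, hgetf, hlen7, hhead8, hhead9⟩ := KEY c0 le_rfl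
    have h0 : 0 < Ls.length := List.length_pos_iff.2 hLsne
    obtain ⟨m, η, hm, hh, hfm, hdη⟩ := hhead8 0 h0
    have := hhead9 0 h0
    simp at this
    exact ⟨η, by rw [this, hh, hfm], hdη⟩
  -- B is finite
  have hInj : Set.InjOn f B := by
    intro a ha b hb hab
    have hca := hBge a ha
    have hcb := hBge b hb
    obtain ⟨Ls, hLsne, hbne, hexp, htb, hgetf, hlen7, hhead8, hhead9⟩ :=
      KEY (max a b) (le_trans hca (le_max_left a b))
    obtain ⟨j, hj, hja⟩ := HPOS (max a b) Ls hlen7 htb hgetf hhead8 a (le_max_left a b) ha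
    obtain ⟨j', hj', hjb⟩ := HPOS (max a b) Ls hlen7 htb hgetf hhead8 b (le_max_right a b) hb
    have hfa : f a = Ls[j].headI := by rw [hja]; exact hhead9 j hj
    have hfb : f b = Ls[j'].headI := by rw [hjb]; exact hhead9 j' hj'
    obtain ⟨-, μ1, hμ1, he1, hn1⟩ := hexp j hj
    obtain ⟨-, μ2, hμ2, he2, hn2⟩ := hexp j' hj'
    have hμeq : μ1 = μ2 := by
      have : μ1 ++ [d] = μ2 ++ [d] := by rw [← he1, ← he2, ← hfa, ← hfb, hab]
      exact List.append_cancel_right this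
    subst hμeq
    have : j = j' := by rw [← hn1, ← hn2]
    rw [hja, hjb, this]
  have hImg : f '' B ⊆ (fun m => f m ++ [d]) '' (Set.Iio c0) := by
    rintro x ⟨n, hn, rfl⟩
    have hcn := hBge n hn
    obtain ⟨Ls, hLsne, hbne, hexp, htb, hgetf, hlen7, hhead8, hhead9⟩ := KEY n hcn
    obtain ⟨j, hj, hjn⟩ := HPOS n Ls hlen7 htb hgetf hhead8 n le_rfl hn
    have hfn : f n = Ls[j].headI := by rw [hjn]; exact hhead9 j hj
    obtain ⟨m, η, hm, hh, hfm, hdη⟩ := hhead8 j hj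
    exact ⟨m, hm, by rw [hfn, hh]⟩
  have hBfin : B.Finite :=
    Set.Finite.of_finite_image
      (Set.Finite.subset ((Set.finite_Iio c0).image _) hImg) hInj
  obtain ⟨N, hNB, hNmax⟩ := Set.exists_max_image B id hBfin ⟨c0, hBc0⟩
  have hcN : c0 ≤ N := hBge N hNB
  refine ⟨N, lt_of_lt_of_le hc0pos hcN, ⟨N, rfl, ?_⟩, ?_⟩
  · -- stability
    intro q hq
    have hcq : c0 ≤ q := le_trans hcN (le_of_lt hq)
    obtain ⟨Ls, hLsne, hbne, hexp, htb, hgetf, hlen7, hhead8, hhead9⟩ := KEY q hcq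
    obtain ⟨j, hj, hjN⟩ := HPOS q Ls hlen7 htb hgetf hhead8 N (by omega) hNB
    have hiq : q - c0 < Ls.flatten.length := by omega
    obtain ⟨j', hj', h1, h2⟩ := flatten_index Ls (q - c0) hiq
    have hBj' : (c0 + (Ls.take j').flatten.length) ∈ B := by
      obtain ⟨m, η, hm, hh, hfm, hdη⟩ := hhead8 j' hj'
      exact ⟨η, by rw [hhead9 j' hj', hh, hfm], hdη⟩
    have hle : c0 + (Ls.take j').flatten.length ≤ N := hNmax _ hBj'
    have hjj : j = j' := by
      rcases lt_trichotomy j j' with h | h | h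
      · exfalso
        have := flatten_take_strict Ls hbne h (le_of_lt hj')
        omega
      · exact h
      · exfalso
        have hs : (Ls.take (j'+1)).flatten.length =
            (Ls.take j').flatten.length + Ls[j'].length := by
          rw [flatten_take_succ Ls hj']; simp
        have hmono : (Ls.take (j'+1)).flatten.length ≤ (Ls.take j).flatten.length := by
          rcases Nat.eq_or_lt_of_le (Nat.succ_le_of_lt h) with he | hlt
          · exact le_of_eq (congrArg (fun x => (Ls.take x).flatten.length) he)
          · exact le_of_lt (flatten_take_strict Ls hbne hlt (le_of_lt hj))
        omega
    subst hjj
    set t := q - c0 - (Ls.take j).flatten.length with htd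
    have ht0 : 0 < t := by omega
    have htlt : t < Ls[j].length := by omega
    have hfq : f q = Ls[j][t] := by
      have := hgetf j hj t htlt
      rwa [show c0 + (Ls.take j).flatten.length + t = q by omega] at this
    obtain ⟨tb, hbe, htbj⟩ := htb j hj
    have hmem : Ls[j][t] ∈ tb := by
      rw [List.getElem_of_eq hbe htlt]
      exact getElem_tail_mem _ _ _ (by omega) (by rw [← hbe]; exact htlt)
    obtain ⟨σ, hσ, hσne⟩ := htbj _ hmem
    have hfN : f N = Ls[j].headI := by rw [hjN]; exact hhead9 j hj
    have h3 : f q = f N ++ σ := by rw [hfq, hσ, hfN]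
    constructor
    · exact ⟨σ, h3.symm⟩
    · intro he
      apply hσne
      have hlen := congrArg List.length he
      rw [h3, List.length_append] at hlen
      exact List.length_eq_zero_iff.1 (by omega)
  · -- f N is a d-child
    obtain ⟨m, -, hfm⟩ := hImg ⟨N, hNB, rfl⟩
    exact ⟨m, hfm.symm⟩
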